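/- Let 0 < Γ ≤ Γ′ and let W₁, W₂, W₄ > 0 with W₁ ≠ W₂. Let γ_SR, γ_SD, γ_RD be independent exponential random variables with rates W₄, W₂, W₁ respectively. Then P({γ_SD < Γ′} ∩ {min(γ_SR, γ_RD + γ_SD) < Γ}) = (1 − e^{−W₄ Γ})(1 − e^{−W₂ Γ′}) + e^{−W₄ Γ}·[ (1 − e^{−W₂ Γ}) + W₂(e^{−W₁ Γ} − e^{−W₂ Γ})/(W₁ − W₂) ]. -/

import Mathlib

open Real MeasureTheory ProbabilityTheory

open Set
open scoped ENNReal

private lemma expMeasure_apply' {r : ℝ} {s : Set ℝ} (hs : MeasurableSet s) :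
    expMeasure r s = ∫⁻ x in s, exponentialPDF r x := by
  rw [expMeasure, gammaMeasure, withDensity_apply _ hs]; rfl

private lemma expMeasure_Iio {r : ℝ} (hr : 0 < r) (x : ℝ) :
    expMeasure r (Iio x) = ENNReal.ofReal (if 0 ≤ x then 1 - Real.exp (-(r * x)) else 0) := by
  rw [expMeasure_apply' measurableSet_Iio,
    setLIntegral_congr (Iio_ae_eq_Iic (a := x)),
    lintegral_exponentialPDF_eq_antiDeriv hr]

private lemma expMeasure_eq' (r : ℝ) : expMeasure r = volume.withDensity (exponentialPDF r) := rfl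

private lemma integral_conv {Γ W1 W2 : ℝ} (hW1 : 0 < W1) (hW2 : 0 < W2)
    (hne : W1 ≠ W2) :
    ∫ x in (0:ℝ)..Γ, W1 * Real.exp (-(W1 * x)) * (1 - Real.exp (-(W2 * (Γ - x))))
      = (1 - Real.exp (-W2 * Γ)) + W2 * (Real.exp (-W1 * Γ) - Real.exp (-W2 * Γ)) / (W1 - W2) := by
  have hsub : W1 - W2 ≠ 0 := sub_ne_zero.mpr hne
  have hderiv : ∀ x ∈ Set.uIcc (0:ℝ) Γ,
      HasDerivAt (fun x => -Real.exp (-(W1 * x))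
          + (W1/(W1-W2)) * Real.exp (-(W2*Γ)) * Real.exp (-((W1-W2)*x)))
        (W1 * Real.exp (-(W1 * x)) * (1 - Real.exp (-(W2 * (Γ - x))))) x := by
    intro x _
    have h1 : HasDerivAt (fun x : ℝ => Real.exp (-(W1 * x))) (-(Real.exp (-(W1*x)) * W1)) x := by
      simpa using (((hasDerivAt_id x).const_mul W1).neg).exp
    have h2 : HasDerivAt (fun x : ℝ => Real.exp (-((W1-W2) * x)))
        (Real.exp (-((W1-W2)*x)) * (W2 - W1)) x := by
      simpa using (((hasDerivAt_id x).const_mul (W1-W2)).neg).exp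
    have h3 := (h1.neg).add (h2.const_mul ((W1/(W1-W2)) * Real.exp (-(W2*Γ))))
    refine h3.congr_deriv ?_
    have he : Real.exp (-(W1 * x)) * Real.exp (-(W2 * (Γ - x)))
        = Real.exp (-(W2*Γ)) * Real.exp (-((W1-W2)*x)) := by
      rw [← Real.exp_add, ← Real.exp_add]; ring_nf
    have hc : (W1/(W1-W2)) * Real.exp (-(W2*Γ)) * (Real.exp (-((W1-W2)*x)) * (W2 - W1))
        = -(W1 * (Real.exp (-(W2*Γ)) * Real.exp (-((W1-W2)*x)))) := by
      field_simp; ring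
    rw [hc, ← he]; ring
  rw [intervalIntegral.integral_eq_sub_of_hasDerivAt hderiv
    (Continuous.intervalIntegrable (by fun_prop) _ _)]
  have hc2 : W1/(W1-W2) * Real.exp (-(W2*Γ)) * Real.exp (-((W1-W2)*Γ))
      = W1/(W1-W2) * Real.exp (-(W1*Γ)) := by
    rw [mul_assoc, ← Real.exp_add]; ring_nf
  rw [hc2]
  simp only [mul_zero, neg_zero, Real.exp_zero, mul_one, neg_mul]
  field_simp
  ring

private lemma prod_sum_lt {Γ W1 W2 : ℝ} (hΓ : 0 < Γ) (hW1 : 0 < W1) (hW2 : 0 < W2)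
    (hne : W1 ≠ W2) :
    ((expMeasure W1).prod (expMeasure W2)) {p : ℝ × ℝ | p.1 + p.2 < Γ}
      = ENNReal.ofReal ((1 - Real.exp (-W2 * Γ))
          + W2 * (Real.exp (-W1 * Γ) - Real.exp (-W2 * Γ)) / (W1 - W2)) := by
  haveI := isProbabilityMeasure_expMeasure hW2
  have hs : MeasurableSet {p : ℝ × ℝ | p.1 + p.2 < Γ} :=
    measurableSet_lt (by fun_prop) measurable_const
  set φ : ℝ → ℝ := fun x => W1 * Real.exp (-(W1 * x)) * (1 - Real.exp (-(W2 * (Γ - x)))) with hφ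
  have hcont : Continuous φ := by fun_prop
  rw [Measure.prod_apply hs]
  have h1 : ∀ x : ℝ, expMeasure W2 (Prod.mk x ⁻¹' {p : ℝ × ℝ | p.1 + p.2 < Γ})
      = ENNReal.ofReal (if 0 ≤ Γ - x then 1 - Real.exp (-(W2 * (Γ - x))) else 0) := by
    intro x
    have : Prod.mk x ⁻¹' {p : ℝ × ℝ | p.1 + p.2 < Γ} = Iio (Γ - x) := by
      ext y; simp only [Set.mem_preimage, Set.mem_setOf_eq, Set.mem_Iio]
      constructor <;> intro <;> linarith
    rw [this, expMeasure_Iio hW2]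
  simp only [h1]
  rw [expMeasure_eq' W1, lintegral_withDensity_eq_lintegral_mul _
    (by unfold exponentialPDF; exact (measurable_exponentialPDFReal W1).ennreal_ofReal)
    (Measurable.ennreal_ofReal (Measurable.ite
      (measurableSet_le measurable_const (by fun_prop)) (by fun_prop) measurable_const))]
  have h2 : ∀ x : ℝ, (exponentialPDF W1 * fun x =>
        ENNReal.ofReal (if 0 ≤ Γ - x then 1 - Real.exp (-(W2 * (Γ - x))) else 0)) x
      = ENNReal.ofReal ((Icc (0:ℝ) Γ).indicator φ x) := by
    intro x
    simp only [Pi.mul_apply, exponentialPDF_eq]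
    rw [← ENNReal.ofReal_mul (by split_ifs <;> positivity)]
    congr 1
    by_cases hx : 0 ≤ x <;> by_cases hxΓ : x ≤ Γ <;>
      simp [Set.indicator, Set.mem_Icc, hx, hxΓ, hφ, sub_nonneg, not_le.mpr, *] <;>
      split_ifs <;> first | rfl | (exfalso; linarith) | ring
  rw [lintegral_congr h2]
  have hint : Integrable ((Icc (0:ℝ) Γ).indicator φ) := by
    exact (hcont.integrableOn_Icc).integrable_indicator measurableSet_Icc
  have hnn : 0 ≤ᵐ[volume] (Icc (0:ℝ) Γ).indicator φ := by
    refine Filter.Eventually.of_forall fun x => Set.indicator_nonneg (fun y hy => ?_) x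
    have : Real.exp (-(W2 * (Γ - y))) ≤ 1 :=
      Real.exp_le_one_iff.mpr (by nlinarith [hy.2])
    have h0 : (0:ℝ) ≤ 1 - Real.exp (-(W2 * (Γ - y))) := by linarith
    positivity
  rw [← ofReal_integral_eq_lintegral_ofReal hint hnn, integral_indicator measurableSet_Icc,
    integral_Icc_eq_integral_Ioc, ← intervalIntegral.integral_of_le hΓ.le,
    integral_conv hW1 hW2 hne]

/-- Outage probability of the HSU architecture in the unstable-buffer case
(Eq. (22)): `γ_SR`, `γ_SD`, `γ_RD` independent exponentials with rates
`W₄`, `W₂`, `W₁`. -/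
theorem stmt14 {Ω : Type*} [MeasurableSpace Ω] (P : Measure Ω) [IsProbabilityMeasure P]
    (Γ Γ' W1 W2 W4 : ℝ)
    (hΓ : 0 < Γ) (hΓΓ' : Γ ≤ Γ')
    (hW1 : 0 < W1) (hW2 : 0 < W2) (hW4 : 0 < W4) (hne : W1 ≠ W2)
    (γSR γSD γRD : Ω → ℝ)
    (hmSR : Measurable γSR) (hmSD : Measurable γSD) (hmRD : Measurable γRD)
    (hindep : iIndepFun (m := fun _ => (inferInstance : MeasurableSpace ℝ))
      ![γSR, γSD, γRD] P)
    (hdSR : Measure.map γSR P = expMeasure W4)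
    (hdSD : Measure.map γSD P = expMeasure W2)
    (hdRD : Measure.map γRD P = expMeasure W1) :
    (P ({ω | γSD ω < Γ'} ∩ {ω | min (γSR ω) (γRD ω + γSD ω) < Γ})).toReal
      = (1 - Real.exp (-W4 * Γ)) * (1 - Real.exp (-W2 * Γ'))
        + Real.exp (-W4 * Γ) *
          ((1 - Real.exp (-W2 * Γ))
            + W2 * (Real.exp (-W1 * Γ) - Real.exp (-W2 * Γ)) / (W1 - W2)) := by
  have hPSR : ∀ {s : Set ℝ}, MeasurableSet s → P (γSR ⁻¹' s) = expMeasure W4 s := fun hs => by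
    rw [← hdSR, Measure.map_apply hmSR hs]
  have hPSD : ∀ {s : Set ℝ}, MeasurableSet s → P (γSD ⁻¹' s) = expMeasure W2 s := fun hs => by
    rw [← hdSD, Measure.map_apply hmSD hs]
  have hPRD : ∀ {s : Set ℝ}, MeasurableSet s → P (γRD ⁻¹' s) = expMeasure W1 s := fun hs => by
    rw [← hdRD, Measure.map_apply hmRD hs]
  have hfmeas : ∀ i, Measurable (![γSR, γSD, γRD] i) := by
    intro i; fin_cases i <;> assumption
  have hind01 : IndepFun γSR γSD P := by
    have := hindep.indepFun (show (0:Fin 3) ≠ 1 by decide)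
    simpa using this
  have hindRDSD : IndepFun γRD γSD P := by
    have := hindep.indepFun (show (2:Fin 3) ≠ 1 by decide)
    simpa using this
  have hpair : IndepFun (fun ω => (γRD ω, γSD ω)) γSR P := by
    have := hindep.indepFun_prodMk hfmeas 2 1 0 (by decide) (by decide)
    simpa using this
  have hsum : IndepFun (fun ω => γRD ω + γSD ω) γSR P := by
    have := hpair.comp (measurable_fst.add measurable_snd) measurable_id
    exact this
  have hmap : P.map (fun ω => (γRD ω, γSD ω)) = (expMeasure W1).prod (expMeasure W2) := by
    rw [← hdRD, ← hdSD]
    exact (indepFun_iff_map_prod_eq_prod_map_map hmRD.aemeasurable hmSD.aemeasurable).mp hindRDSD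
  set B : Set Ω := γSR ⁻¹' (Iio Γ) with hB
  set A : Set Ω := γSD ⁻¹' (Iio Γ') with hA
  set C : Set Ω := {ω | γRD ω + γSD ω < Γ} with hC
  have hmB : MeasurableSet B := hmSR measurableSet_Iio
  have hmC : MeasurableSet C := measurableSet_lt (hmRD.add hmSD) measurable_const
  have hRD0 : ∀ᵐ ω ∂P, 0 ≤ γRD ω := by
    rw [ae_iff]
    have h : {ω | ¬ 0 ≤ γRD ω} = γRD ⁻¹' (Iio 0) := by ext ω; simp [not_le]
    rw [h, hPRD measurableSet_Iio, expMeasure_Iio hW1]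
    simp
  have hae : ({ω | γSD ω < Γ'} ∩ {ω | min (γSR ω) (γRD ω + γSD ω) < Γ} : Set Ω)
      =ᵐ[P] (((B ∩ A) ∪ (C ∩ Bᶜ) : Set Ω)) := by
    filter_upwards [hRD0] with ω h0
    simp only [eq_iff_iff, Set.mem_inter_iff, Set.mem_union, Set.mem_setOf_eq,
      Set.mem_compl_iff, Set.mem_preimage, Set.mem_Iio, min_lt_iff, hB, hA, hC]
    constructor
    · rintro ⟨ha', hbc⟩
      rcases hbc with hb' | hc'
      · exact Or.inl ⟨hb', ha'⟩
      · by_cases hb : γSR ω < Γ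
        · exact Or.inl ⟨hb, ha'⟩
        · exact Or.inr ⟨hc', hb⟩
    · rintro (⟨hb, ha⟩ | ⟨hc, _⟩)
      · exact ⟨ha, Or.inl hb⟩
      · have hc' : γRD ω + γSD ω < Γ := hc
        have hd : γSD ω < Γ' := by linarith
        exact ⟨hd, Or.inr hc'⟩
  have hdisj : Disjoint (B ∩ A) (C ∩ Bᶜ) := by
    refine Set.disjoint_left.mpr ?_
    rintro ω ⟨hb, _⟩ ⟨_, hb'⟩
    exact hb' hb
  have e1 : P (γSR ⁻¹' (Iio Γ)) = ENNReal.ofReal (1 - Real.exp (-(W4*Γ))) := by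
    rw [hPSR measurableSet_Iio, expMeasure_Iio hW4, if_pos hΓ.le]
  have e2 : P (γSD ⁻¹' (Iio Γ')) = ENNReal.ofReal (1 - Real.exp (-(W2*Γ'))) := by
    rw [hPSD measurableSet_Iio, expMeasure_Iio hW2, if_pos (le_trans hΓ.le hΓΓ')]
  have hexp4 : Real.exp (-(W4*Γ)) ≤ 1 := Real.exp_le_one_iff.mpr (by nlinarith)
  have hexp2 : Real.exp (-(W2*Γ')) ≤ 1 := Real.exp_le_one_iff.mpr (by nlinarith)
  have e3 : P (γSR ⁻¹' (Ici Γ)) = ENNReal.ofReal (Real.exp (-(W4*Γ))) := by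
    have h : (γSR ⁻¹' (Ici Γ)) = (γSR ⁻¹' (Iio Γ))ᶜ := by ext ω; simp [not_lt]
    rw [h, measure_compl (hmSR measurableSet_Iio) (measure_ne_top _ _), measure_univ, e1,
      (show (1:ℝ≥0∞) = ENNReal.ofReal 1 from ENNReal.ofReal_one.symm),
      ← ENNReal.ofReal_sub _ (by linarith)]
    norm_num
  have hT1 : P (B ∩ A)
      = ENNReal.ofReal (1 - Real.exp (-(W4*Γ))) * ENNReal.ofReal (1 - Real.exp (-(W2*Γ'))) := by
    rw [hB, hA, hind01.measure_inter_preimage_eq_mul _ _ measurableSet_Iio measurableSet_Iio,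
      e1, e2]
  set V : ℝ := (1 - Real.exp (-W2 * Γ))
      + W2 * (Real.exp (-W1 * Γ) - Real.exp (-W2 * Γ)) / (W1 - W2) with hV
  have hVnn : 0 ≤ V := by
    rw [hV, ← integral_conv hW1 hW2 hne]
    apply intervalIntegral.integral_nonneg hΓ.le
    intro x hx
    have h1 : Real.exp (-(W2 * (Γ - x))) ≤ 1 := Real.exp_le_one_iff.mpr (by nlinarith [hx.2])
    have h2 : (0:ℝ) ≤ 1 - Real.exp (-(W2 * (Γ - x))) := by linarith
    positivity
  have hT2 : P (C ∩ Bᶜ) = ENNReal.ofReal V * ENNReal.ofReal (Real.exp (-(W4*Γ))) := by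
    have hBc : Bᶜ = γSR ⁻¹' (Ici Γ) := by ext ω; simp [hB, not_lt]
    have hCeq : C = (fun ω => γRD ω + γSD ω) ⁻¹' (Iio Γ) := rfl
    rw [hCeq, hBc,
      hsum.measure_inter_preimage_eq_mul _ _ measurableSet_Iio measurableSet_Ici, e3]
    congr 1
    have h : (fun ω => γRD ω + γSD ω) ⁻¹' (Iio Γ)
        = (fun ω => (γRD ω, γSD ω)) ⁻¹' {p : ℝ × ℝ | p.1 + p.2 < Γ} := rfl
    rw [h, ← Measure.map_apply (hmRD.prodMk hmSD)
      (measurableSet_lt (by fun_prop) measurable_const), hmap, prod_sum_lt hΓ hW1 hW2 hne]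
  rw [measure_congr hae, measure_union hdisj (hmC.inter hmB.compl), hT1, hT2,
    ← ENNReal.ofReal_mul (by linarith), ← ENNReal.ofReal_mul hVnn,
    ← ENNReal.ofReal_add (by nlinarith) (by positivity),
    ENNReal.toReal_ofReal (by nlinarith [mul_nonneg hVnn (Real.exp_pos (-(W4*Γ))).le])]
  rw [hV]
  simp only [neg_mul]
  ring
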